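/- Let γ > 0 and T the one-dimensional Dunkl operator Tf(x) = f'(x) + γ (f(x) - f(-x))/x. For each y ∈ ℝ, the function x ↦ K(x,y) defined by K(x,y) = (Γ(γ+1/2)/(√π Γ(γ))) ∫_{-1}^{1} e^{t x y}(1-t²)^{γ-1}(1+t) dt satisfies T_x K(x,y) = y K(x,y) and K(0,y) = 1. -/

import Mathlib

open Real

/-- The rank-one Dunkl operator with multiplicity `γ`, extended at the origin by
`Tf(0) = (1 + 2γ) f'(0)`. -/
noncomputable def dunklOp1d (γ : ℝ) (f : ℝ → ℝ) (x : ℝ) : ℝ :=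
  if x = 0 then (1 + 2 * γ) * deriv f 0
  else deriv f x + γ * (f x - f (-x)) / x

/-- The one-dimensional Dunkl kernel (real arguments), given by its Laplace-type
integral representation. -/
noncomputable def dunklKernel1dReal (γ : ℝ) (x y : ℝ) : ℝ :=
  ∫ t in (-1 : ℝ)..1,
    Real.Gamma (γ + 1/2) / (Real.sqrt π * Real.Gamma γ) *
      (Real.exp (t * x * y) * ((1 - t ^ 2) ^ (γ - 1) * (1 + t)))

open MeasureTheory Set intervalIntegral

namespace DunklAux

lemma sq_split {c t : ℝ} (h1 : -1 ≤ t) (h2 : t ≤ 1) :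
    (1 - t ^ 2) ^ c = (1 - t) ^ c * (1 + t) ^ c := by
  rw [show (1:ℝ) - t ^ 2 = (1 - t) * (1 + t) by ring,
    Real.mul_rpow (by linarith) (by linarith)]

lemma intInt {c : ℝ} (hc : -1 < c) {φ : ℝ → ℝ} (hφ : Continuous φ) :
    IntervalIntegrable (fun t => (1 - t ^ 2) ^ c * φ t) volume (-1) 1 := by
  have h01 : IntervalIntegrable (fun t => (1 - t ^ 2) ^ c * φ t) volume 0 1 := by
    have hf : IntervalIntegrable (fun t : ℝ => (1 - t) ^ c) volume 0 1 := by
      have := (intervalIntegrable_rpow' (a := 0) (b := 1) hc).comp_sub_left 1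
      simpa using this.symm
    have hg : ContinuousOn (fun t : ℝ => (1 + t) ^ c * φ t) (uIcc (0:ℝ) 1) := by
      refine ContinuousOn.mul ?_ hφ.continuousOn
      refine ContinuousOn.rpow_const (by fun_prop) fun t ht => ?_
      rw [uIcc_of_le (by norm_num)] at ht
      exact Or.inl (by linarith [ht.1] : (0:ℝ) < 1 + t).ne'
    refine (hf.mul_continuousOn hg).congr ?_
    intro t ht; dsimp only
    rw [uIoc_of_le (by norm_num : (0:ℝ) ≤ 1)] at ht
    rw [sq_split (by linarith [ht.1]) ht.2]; ring
  have hm0 : IntervalIntegrable (fun t => (1 - t ^ 2) ^ c * φ t) volume (-1) 0 := by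
    have hf : IntervalIntegrable (fun t : ℝ => (1 + t) ^ c) volume (-1) 0 := by
      have := (intervalIntegrable_rpow' (a := 0) (b := 1) hc).comp_add_right 1
      simpa [add_comm] using this
    have hg : ContinuousOn (fun t : ℝ => (1 - t) ^ c * φ t) (uIcc (-1:ℝ) 0) := by
      refine ContinuousOn.mul ?_ hφ.continuousOn
      refine ContinuousOn.rpow_const (by fun_prop) fun t ht => ?_
      rw [uIcc_of_le (by norm_num)] at ht
      exact Or.inl (by linarith [ht.2] : (0:ℝ) < 1 - t).ne'
    refine (hf.mul_continuousOn hg).congr ?_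
    intro t ht; dsimp only
    rw [uIoc_of_le (by norm_num : (-1:ℝ) ≤ 0)] at ht
    rw [sq_split ht.1.le (by linarith [ht.2])]; ring
  exact hm0.trans h01



open Metric

lemma meas_aux (c : ℝ) (φ : ℝ → ℝ) (hφ : Continuous φ) (x y : ℝ) :
    AEStronglyMeasurable (fun t => Real.exp (t * x * y) * ((1 - t ^ 2) ^ c * φ t))
      (volume.restrict (uIoc (-1:ℝ) 1)) := by
  apply Measurable.aestronglyMeasurable
  fun_prop

lemma hasDeriv_A {c : ℝ} (hc : -1 < c) {φ : ℝ → ℝ} (hφ : Continuous φ) (y x₀ : ℝ) :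
    HasDerivAt (fun x => ∫ t in (-1:ℝ)..1, Real.exp (t * x * y) * ((1 - t ^ 2) ^ c * φ t))
      (∫ t in (-1:ℝ)..1, t * y * (Real.exp (t * x₀ * y) * ((1 - t ^ 2) ^ c * φ t))) x₀ := by
  have key := intervalIntegral.hasDerivAt_integral_of_dominated_loc_of_deriv_le
    (F := fun x t => Real.exp (t * x * y) * ((1 - t ^ 2) ^ c * φ t))
    (F' := fun x t => t * y * (Real.exp (t * x * y) * ((1 - t ^ 2) ^ c * φ t)))
    (a := (-1:ℝ)) (b := 1) (μ := volume) (x₀ := x₀)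
    (bound := fun t => (1 - t ^ 2) ^ c * (|φ t| * (|y| * Real.exp ((|x₀| + 1) * |y|))))
    (s := ball x₀ 1) (ball_mem_nhds x₀ one_pos)
    (Filter.Eventually.of_forall fun x => meas_aux c φ hφ x y)
    ?_ ?_ ?_ ?_ ?_
  · exact key.2
  · -- hF_int
    refine (intInt hc (φ := fun t => φ t * Real.exp (t * x₀ * y))
      (by fun_prop)).congr ?_
    exact fun t _ => by ring
  · apply Measurable.aestronglyMeasurable; fun_prop
  · -- bound
    refine Filter.Eventually.of_forall fun t ht x hx => ?_
    rw [uIoc_of_le (by norm_num : (-1:ℝ) ≤ 1)] at ht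
    have h1 : (0:ℝ) ≤ (1 - t ^ 2) ^ c := Real.rpow_nonneg (by nlinarith [ht.1, ht.2]) c
    have htabs : |t| ≤ 1 := abs_le.2 ⟨ht.1.le, ht.2⟩
    have hxabs : |x| ≤ |x₀| + 1 := by
      have := mem_ball_iff_norm.1 hx
      calc |x| = |x₀ + (x - x₀)| := by ring_nf
        _ ≤ |x₀| + |x - x₀| := abs_add_le _ _
        _ ≤ |x₀| + 1 := by simpa [Real.norm_eq_abs] using add_le_add_left (le_of_lt this) |x₀|
    have hexp : Real.exp (t * x * y) ≤ Real.exp ((|x₀| + 1) * |y|) := by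
      apply Real.exp_le_exp.2
      calc t * x * y ≤ |t * x * y| := le_abs_self _
        _ = |t| * |x| * |y| := by rw [abs_mul, abs_mul]
        _ ≤ 1 * (|x₀| + 1) * |y| := by gcongr
        _ = (|x₀| + 1) * |y| := by ring
    rw [Real.norm_eq_abs, abs_mul, abs_mul, abs_mul, abs_mul, abs_of_nonneg h1,
      abs_of_pos (Real.exp_pos _)]
    calc |t| * |y| * (Real.exp (t * x * y) * ((1 - t ^ 2) ^ c * |φ t|))
        ≤ 1 * |y| * (Real.exp ((|x₀| + 1) * |y|) * ((1 - t ^ 2) ^ c * |φ t|)) := by gcongr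
      _ = (1 - t ^ 2) ^ c * (|φ t| * (|y| * Real.exp ((|x₀| + 1) * |y|))) := by ring
  · exact intInt hc (by fun_prop)
  · -- differentiability
    refine Filter.Eventually.of_forall fun t ht x hx => ?_
    have h1 : HasDerivAt (fun x => t * x * y) (t * y) x := by
      simpa using ((hasDerivAt_id x).const_mul t).mul_const y
    have := (h1.exp).mul_const ((1 - t ^ 2) ^ c * φ t)
    convert this using 1
    exacts [rfl, by ring]


lemma rpow_succ {γ u : ℝ} (hγ : γ ≠ 0) (hu : 0 ≤ u) : u ^ γ = u ^ (γ - 1) * u := by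
  rcases eq_or_lt_of_le hu with h | h
  · rw [← h]; simp [Real.zero_rpow hγ]
  · have := Real.rpow_add_one h.ne' (γ - 1)
    rwa [sub_add_cancel] at this

lemma star {γ : ℝ} (hγ : 0 < γ) (x y : ℝ) :
    x * y * (∫ t in (-1:ℝ)..1, Real.exp (t * x * y) * (1 - t ^ 2) ^ γ)
      = 2 * γ * ∫ t in (-1:ℝ)..1, t * Real.exp (t * x * y) * (1 - t ^ 2) ^ (γ - 1) := by
  have hB : IntervalIntegrable (fun t => Real.exp (t * x * y) * (1 - t ^ 2) ^ γ)
      volume (-1) 1 :=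
    (intInt (by linarith) (φ := fun t => Real.exp (t * x * y)) (by fun_prop)).congr
      (fun t _ => mul_comm _ _)
  have hJ : IntervalIntegrable (fun t => t * Real.exp (t * x * y) * (1 - t ^ 2) ^ (γ - 1))
      volume (-1) 1 :=
    (intInt (by linarith) (φ := fun t => t * Real.exp (t * x * y)) (by fun_prop)).congr
      (fun t _ => mul_comm _ _)
  have key : (∫ t in (-1:ℝ)..1,
      ((x * y) * (Real.exp (t * x * y) * (1 - t ^ 2) ^ γ)
        - (2 * γ) * (t * Real.exp (t * x * y) * (1 - t ^ 2) ^ (γ - 1)))) = 0 := by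
    rw [integral_eq_sub_of_hasDeriv_right_of_le (by norm_num)
      (f := fun t => Real.exp (t * x * y) * (1 - t ^ 2) ^ γ) ?cont ?deriv ?int]
    · norm_num [Real.zero_rpow hγ.ne']
    case cont =>
      exact ((by fun_prop : Continuous fun t : ℝ => Real.exp (t * x * y)).continuousOn).mul
        (ContinuousOn.rpow_const (by fun_prop) fun t _ => Or.inr hγ.le)
    case deriv =>
      intro t ht
      have hpos : (0:ℝ) < 1 - t ^ 2 := by nlinarith [ht.1, ht.2]
      have h1 : HasDerivAt (fun t : ℝ => Real.exp (t * x * y))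
          (Real.exp (t * x * y) * (x * y)) t := by
        have : HasDerivAt (fun t : ℝ => t * x * y) (x * y) t := by
          simpa using ((hasDerivAt_id t).mul_const x).mul_const y
        exact this.exp
      have h2 : HasDerivAt (fun t : ℝ => (1 - t ^ 2) ^ γ)
          (-(2 * t ^ 1) * γ * (1 - t ^ 2) ^ (γ - 1)) t :=
        ((hasDerivAt_pow 2 t).const_sub 1).rpow_const (Or.inl hpos.ne')
      refine ((h1.mul h2).congr_deriv ?_).hasDerivWithinAt
      ring
    case int =>
      exact (hB.const_mul (x * y)).sub (hJ.const_mul (2 * γ))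
  rw [integral_sub (hB.const_mul (x * y)) (hJ.const_mul (2 * γ)),
    intervalIntegral.integral_const_mul, intervalIntegral.integral_const_mul] at key
  linarith

lemma star0 {γ : ℝ} (hγ : 0 < γ) :
    (1 + 2 * γ) * (∫ t in (-1:ℝ)..1, (1 - t ^ 2) ^ γ)
      = 2 * γ * ∫ t in (-1:ℝ)..1, (1 - t ^ 2) ^ (γ - 1) := by
  have hB : IntervalIntegrable (fun t : ℝ => (1 - t ^ 2) ^ γ) volume (-1) 1 :=
    (intInt (by linarith) (φ := fun _ => (1:ℝ)) (by fun_prop)).congr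
      (fun t _ => mul_one _)
  have hA : IntervalIntegrable (fun t : ℝ => (1 - t ^ 2) ^ (γ - 1)) volume (-1) 1 :=
    (intInt (by linarith) (φ := fun _ => (1:ℝ)) (by fun_prop)).congr
      (fun t _ => mul_one _)
  have key : (∫ t in (-1:ℝ)..1,
      ((1 + 2 * γ) * (1 - t ^ 2) ^ γ - (2 * γ) * (1 - t ^ 2) ^ (γ - 1))) = 0 := by
    rw [integral_eq_sub_of_hasDeriv_right_of_le (by norm_num)
      (f := fun t => t * (1 - t ^ 2) ^ γ) ?cont ?deriv ?int]
    · norm_num [Real.zero_rpow hγ.ne']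
    case cont =>
      exact (continuous_id.continuousOn).mul
        (ContinuousOn.rpow_const (by fun_prop) fun t _ => Or.inr hγ.le)
    case deriv =>
      intro t ht
      have hpos : (0:ℝ) < 1 - t ^ 2 := by nlinarith [ht.1, ht.2]
      have h2 : HasDerivAt (fun t : ℝ => (1 - t ^ 2) ^ γ)
          (-(2 * t ^ 1) * γ * (1 - t ^ 2) ^ (γ - 1)) t :=
        ((hasDerivAt_pow 2 t).const_sub 1).rpow_const (Or.inl hpos.ne')
      refine (((hasDerivAt_id t).mul h2).congr_deriv ?_).hasDerivWithinAt
      have hQ : (1 - t ^ 2) ^ γ = (1 - t ^ 2) ^ (γ - 1) * (1 - t ^ 2) :=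
        rpow_succ hγ.ne' hpos.le
      rw [hQ]; simp only [id_eq]; ring
    case int =>
      exact (hB.const_mul (1 + 2 * γ)).sub (hA.const_mul (2 * γ))
  rw [integral_sub (hB.const_mul (1 + 2 * γ)) (hA.const_mul (2 * γ)),
    intervalIntegral.integral_const_mul, intervalIntegral.integral_const_mul] at key
  linarith


lemma betaEval {γ : ℝ} (hγ : 0 < γ) :
    (∫ t in (-1:ℝ)..1, (1 - t ^ 2) ^ (γ - 1))
      = Real.sqrt π * Real.Gamma γ / Real.Gamma (γ + 1/2) := by
  have hG : 0 < Real.Gamma γ := Real.Gamma_pos_of_pos hγ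
  have hG2 : 0 < Real.Gamma (2 * γ) := Real.Gamma_pos_of_pos (by linarith)
  have hGh : 0 < Real.Gamma (γ + 1/2) := Real.Gamma_pos_of_pos (by linarith)
  set Ib : ℝ := ∫ u in (0:ℝ)..1, u ^ (γ - 1) * (1 - u) ^ (γ - 1) with hIb
  -- Step 1 : the affine substitution t = 2u - 1
  have h1 : (∫ t in (-1:ℝ)..1, (1 - t ^ 2) ^ (γ - 1))
      = 2 * ∫ u in (0:ℝ)..1, ((1:ℝ) - (2 * u - 1) ^ 2) ^ (γ - 1) := by
    have := intervalIntegral.integral_comp_mul_sub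
      (fun t : ℝ => ((1:ℝ) - t ^ 2) ^ (γ - 1)) (two_ne_zero) (1:ℝ) (a := 0) (b := 1)
    norm_num at this
    rw [this]; ring
  -- Step 2 : pointwise rewriting on [0,1]
  have h2 : (∫ u in (0:ℝ)..1, ((1:ℝ) - (2 * u - 1) ^ 2) ^ (γ - 1))
      = 4 ^ (γ - 1) * Ib := by
    rw [hIb, ← intervalIntegral.integral_const_mul]
    apply intervalIntegral.integral_congr
    intro u hu
    rw [uIcc_of_le (by norm_num : (0:ℝ) ≤ 1)] at hu
    simp only []
    rw [show (1:ℝ) - (2 * u - 1) ^ 2 = 4 * (u * (1 - u)) by ring,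
      Real.mul_rpow (by norm_num) (mul_nonneg hu.1 (by linarith [hu.2])),
      Real.mul_rpow hu.1 (by linarith [hu.2])]
  -- Step 3 : Beta function value
  have h3 : Real.Gamma γ * Real.Gamma γ = Real.Gamma (2 * γ) * Ib := by
    have hbeta := Complex.Gamma_mul_Gamma_eq_betaIntegral
      (s := (γ:ℂ)) (t := (γ:ℂ)) (by simpa using hγ) (by simpa using hγ)
    have hβ : Complex.betaIntegral γ γ = (Ib : ℂ) := by
      rw [hIb, Complex.betaIntegral, ← intervalIntegral.integral_ofReal]
      apply intervalIntegral.integral_congr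
      intro u hu
      rw [uIcc_of_le (by norm_num : (0:ℝ) ≤ 1)] at hu
      simp only []
      rw [show ((γ:ℂ) - 1) = ((γ - 1 : ℝ) : ℂ) by push_cast; ring,
        ← Complex.ofReal_cpow hu.1, ← Complex.ofReal_one, ← Complex.ofReal_sub,
        ← Complex.ofReal_cpow (by linarith [hu.2]), ← Complex.ofReal_mul]
    rw [hβ] at hbeta
    rw [show ((γ:ℂ) + γ) = ((2 * γ : ℝ) : ℂ) by push_cast; ring] at hbeta
    rw [Complex.Gamma_ofReal, Complex.Gamma_ofReal] at hbeta
    exact_mod_cast hbeta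
  -- Step 4 : powers of two
  have h22 : (2:ℝ) ^ (2:ℝ) = 4 := by
    have := Real.rpow_natCast (2:ℝ) 2
    norm_num at this
    linarith [this]
  have h4 : (4:ℝ) ^ (γ - 1) = (2:ℝ) ^ (2 * γ - 2) := by
    rw [← h22, ← Real.rpow_mul (by norm_num : (0:ℝ) ≤ 2),
      show (2:ℝ) * (γ - 1) = 2 * γ - 2 by ring]
  have hmul : (2:ℝ) ^ (2 * γ - 2) * 2 ^ (1 - 2 * γ) = 2⁻¹ := by
    rw [← Real.rpow_add two_pos, show 2 * γ - 2 + (1 - 2 * γ) = -1 by ring,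
      Real.rpow_neg_one]
  have dup := Real.Gamma_mul_Gamma_add_half γ
  -- Conclusion
  have hIbval : Ib = Real.Gamma γ * Real.Gamma γ / Real.Gamma (2 * γ) := by
    field_simp
    linarith [h3]
  rw [h1, h2, h4, hIbval]
  set G := Real.Gamma γ with hGdef
  set H := Real.Gamma (γ + 1/2) with hHdef
  set D := Real.Gamma (2 * γ) with hDdef
  set s := Real.sqrt π with hsdef
  set a := (2:ℝ) ^ (2 * γ - 2) with hadef
  set b := (2:ℝ) ^ (1 - 2 * γ) with hbdef
  field_simp
  linear_combination (2 * a) * dup + (2 * D * s) * hmul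


variable (γ y : ℝ)

/-- The main integral. -/
noncomputable def Aint (x : ℝ) : ℝ :=
  ∫ t in (-1:ℝ)..1, Real.exp (t * x * y) * ((1 - t ^ 2) ^ (γ - 1) * (1 + t))

noncomputable def A0int (x : ℝ) : ℝ :=
  ∫ t in (-1:ℝ)..1, Real.exp (t * x * y) * (1 - t ^ 2) ^ (γ - 1)

noncomputable def Jint (x : ℝ) : ℝ :=
  ∫ t in (-1:ℝ)..1, t * Real.exp (t * x * y) * (1 - t ^ 2) ^ (γ - 1)

noncomputable def Bint (x : ℝ) : ℝ :=
  ∫ t in (-1:ℝ)..1, Real.exp (t * x * y) * (1 - t ^ 2) ^ γ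

variable {γ}

lemma hA0int (hγ : 0 < γ) (x : ℝ) :
    IntervalIntegrable (fun t => Real.exp (t * x * y) * (1 - t ^ 2) ^ (γ - 1))
      volume (-1) 1 :=
  (intInt (by linarith) (φ := fun t => Real.exp (t * x * y)) (by fun_prop)).congr
    (fun t _ => mul_comm _ _)

lemma hJint (hγ : 0 < γ) (x : ℝ) :
    IntervalIntegrable (fun t => t * Real.exp (t * x * y) * (1 - t ^ 2) ^ (γ - 1))
      volume (-1) 1 :=
  (intInt (by linarith) (φ := fun t => t * Real.exp (t * x * y)) (by fun_prop)).congr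
    (fun t _ => mul_comm _ _)

lemma hBint (hγ : 0 < γ) (x : ℝ) :
    IntervalIntegrable (fun t => Real.exp (t * x * y) * (1 - t ^ 2) ^ γ)
      volume (-1) 1 :=
  (intInt (by linarith) (φ := fun t => Real.exp (t * x * y)) (by fun_prop)).congr
    (fun t _ => mul_comm _ _)

/-- Decomposition of `A`. -/
lemma decompA (hγ : 0 < γ) (x : ℝ) : Aint γ y x = A0int γ y x + Jint γ y x := by
  rw [Aint, A0int, Jint, ← intervalIntegral.integral_add (hA0int y hγ x) (hJint y hγ x)]
  apply intervalIntegral.integral_congr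
  intro t _
  ring

/-- Reflection: `A(-x)` in terms of integrals at `x`. -/
lemma reflA (hγ : 0 < γ) (x : ℝ) : Aint γ y (-x) = A0int γ y x - Jint γ y x := by
  have h1 : Aint γ y (-x)
      = ∫ t in (-1:ℝ)..1, Real.exp (t * x * y) * ((1 - t ^ 2) ^ (γ - 1) * (1 - t)) := by
    have h := intervalIntegral.integral_comp_neg (a := (-1:ℝ)) (b := 1)
      (fun t => Real.exp (t * x * y) * ((1 - t ^ 2) ^ (γ - 1) * (1 - t)))
    simp only [neg_neg] at h
    rw [Aint, ← h]
    apply intervalIntegral.integral_congr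
    intro t _
    have e1 : t * -x * y = -t * x * y := by ring
    have e2 : ((1:ℝ) - (-t) ^ 2) = 1 - t ^ 2 := by ring
    have e3 : ((1:ℝ) - -t) = 1 + t := by ring
    simp only [e1, e2, e3]
  rw [h1, A0int, Jint, ← intervalIntegral.integral_sub (hA0int y hγ x) (hJint y hγ x)]
  apply intervalIntegral.integral_congr
  intro t _
  ring

/-- Decomposition of the derivative integrand. -/
lemma decompA' (hγ : 0 < γ) (x : ℝ) :
    (∫ t in (-1:ℝ)..1, t * y * (Real.exp (t * x * y) * ((1 - t ^ 2) ^ (γ - 1) * (1 + t))))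
      = y * Jint γ y x + y * A0int γ y x - y * Bint γ y x := by
  rw [Jint, A0int, Bint, ← intervalIntegral.integral_const_mul,
    ← intervalIntegral.integral_const_mul, ← intervalIntegral.integral_const_mul,
    ← intervalIntegral.integral_add ((hJint y hγ x).const_mul y) ((hA0int y hγ x).const_mul y),
    ← intervalIntegral.integral_sub
      (((hJint y hγ x).const_mul y).add ((hA0int y hγ x).const_mul y))
      ((hBint y hγ x).const_mul y)]
  apply intervalIntegral.integral_congr
  intro t ht
  rw [uIcc_of_le (by norm_num : (-1:ℝ) ≤ 1)] at ht
  have hQ : (1 - t ^ 2) ^ γ = (1 - t ^ 2) ^ (γ - 1) * (1 - t ^ 2) :=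
    rpow_succ hγ.ne' (by nlinarith [ht.1, ht.2])
  simp only []
  rw [hQ]
  ring

/-- The kernel as `C * A`. -/
lemma kernel_eq (x : ℝ) :
    dunklKernel1dReal γ x y
      = Real.Gamma (γ + 1/2) / (Real.sqrt π * Real.Gamma γ) * Aint γ y x := by
  rw [dunklKernel1dReal, Aint, intervalIntegral.integral_const_mul]

lemma kernel_hasDeriv (hγ : 0 < γ) (x : ℝ) :
    HasDerivAt (fun x => dunklKernel1dReal γ x y)
      (Real.Gamma (γ + 1/2) / (Real.sqrt π * Real.Gamma γ) *
        (y * Jint γ y x + y * A0int γ y x - y * Bint γ y x)) x := by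
  have h := ((hasDeriv_A (by linarith : (-1:ℝ) < γ - 1)
    (φ := fun t => 1 + t) (by fun_prop) y x).const_mul
      (Real.Gamma (γ + 1/2) / (Real.sqrt π * Real.Gamma γ)))
  rw [decompA' y hγ x] at h
  have hfun : (fun x => Real.Gamma (γ + 1/2) / (Real.sqrt π * Real.Gamma γ) *
      ∫ t in (-1:ℝ)..1, Real.exp (t * x * y) * ((1 - t ^ 2) ^ (γ - 1) * (1 + t)))
      = fun x => dunklKernel1dReal γ x y := by
    funext x
    rw [kernel_eq, Aint]
  rwa [hfun] at h

end DunklAux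

theorem dunkl_kernel_eigenfunction (γ : ℝ) (hγ : 0 < γ) (y : ℝ) :
    (∀ x : ℝ, dunklOp1d γ (fun x => dunklKernel1dReal γ x y) x
        = y * dunklKernel1dReal γ x y) ∧
      dunklKernel1dReal γ 0 y = 1 := by
  have hπ : (0:ℝ) < Real.sqrt π := Real.sqrt_pos.2 Real.pi_pos
  have hG : 0 < Real.Gamma γ := Real.Gamma_pos_of_pos hγ
  have hGh : 0 < Real.Gamma (γ + 1/2) := Real.Gamma_pos_of_pos (by linarith)
  set C := Real.Gamma (γ + 1/2) / (Real.sqrt π * Real.Gamma γ) with hC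
  have hA00 : DunklAux.A0int γ y 0 = ∫ t in (-1:ℝ)..1, (1 - t ^ 2) ^ (γ - 1) := by
    rw [DunklAux.A0int]
    apply intervalIntegral.integral_congr
    intro t _
    norm_num
  have hB0 : DunklAux.Bint γ y 0 = ∫ t in (-1:ℝ)..1, (1 - t ^ 2) ^ γ := by
    rw [DunklAux.Bint]
    apply intervalIntegral.integral_congr
    intro t _
    norm_num
  have hJ0 : DunklAux.Jint γ y 0 = 0 := by
    have h : 0 * y * DunklAux.Bint γ y 0 = 2 * γ * DunklAux.Jint γ y 0 :=
      DunklAux.star hγ 0 y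
    have h2 : 2 * γ * DunklAux.Jint γ y 0 = 0 := by linarith
    rcases mul_eq_zero.mp h2 with h3 | h3
    · exact absurd h3 (by positivity)
    · exact h3
  have hstar0 := DunklAux.star0 hγ
  have hK : ∀ x, dunklKernel1dReal γ x y = C * DunklAux.Aint γ y x := fun x =>
    DunklAux.kernel_eq y x
  have hD : ∀ x, deriv (fun x => dunklKernel1dReal γ x y) x
      = C * (y * DunklAux.Jint γ y x + y * DunklAux.A0int γ y x
        - y * DunklAux.Bint γ y x) := fun x => (DunklAux.kernel_hasDeriv y hγ x).deriv
  constructor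
  · intro x
    by_cases hx : x = 0
    · subst hx
      rw [dunklOp1d, if_pos rfl, hD 0, hK 0, DunklAux.decompA y hγ 0, hJ0, hA00, hB0]
      linear_combination (-(y * C)) * hstar0
    · rw [dunklOp1d, if_neg hx, hD x, hK x, hK (-x), DunklAux.decompA y hγ x,
        DunklAux.reflA y hγ x]
      have hstar : x * y * DunklAux.Bint γ y x = 2 * γ * DunklAux.Jint γ y x :=
        DunklAux.star hγ x y
      field_simp
      linear_combination (-C) * hstar
  · rw [hK 0, DunklAux.decompA y hγ 0, hJ0, hA00, DunklAux.betaEval hγ, hC]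
    field_simp
    ring
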